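/- The low-frequency attenuation per wavelength α_λ(Ω) associated with the dispersion relation 1/(z U_Euler)² = 1 + (Û² − 1)·iΩ/(1+iΩ), defined by α_λ = −2π Im(k)/Re(k) with k = z ω, attains its maximum over Ω ∈ (0,∞) at Ω_peak = 1/Û, with peak value α_λ^{peak} = 2π (Û − 1)/(Û + 1). -/

import Mathlib

open Real Complex

lemma sqrt_ratio_aux (w : ℂ) (hw : 0 < w.re) :
    0 < (w ^ ((1:ℂ)/2)).re ∧
    (w ^ ((1:ℂ)/2)).im / (w ^ ((1:ℂ)/2)).re = w.im / (‖w‖ + w.re) := by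
  have hne : w ≠ 0 := by
    intro h; rw [h] at hw; simp at hw
  set z := w ^ ((1:ℂ)/2) with hzdef
  have hsq : z ^ 2 = w := by
    have : ((1:ℂ)/2) = ((2:ℕ):ℂ)⁻¹ := by norm_num
    rw [hzdef, this, Complex.cpow_nat_inv_pow _ (by norm_num)]
  have harg : |w.arg| < Real.pi / 2 := Complex.abs_arg_lt_pi_div_two_iff.2 (Or.inl hw)
  have harg' := abs_lt.1 harg
  have hre : 0 < z.re := by
    rw [hzdef, Complex.cpow_def_of_ne_zero hne, Complex.exp_re]
    have him : (Complex.log w * ((1:ℂ)/2)).im = w.arg / 2 := by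
      simp [Complex.mul_im, Complex.log_im, Complex.log_re]
      ring
    rw [him]
    have hpi := Real.pi_pos
    exact mul_pos (Real.exp_pos _)
      (Real.cos_pos_of_mem_Ioo ⟨by linarith [harg'.1], by linarith [harg'.2]⟩)
  have habs : z.re^2 + z.im^2 = ‖w‖ := by
    have : ‖w‖ = ‖z‖ ^ 2 := by rw [← hsq, norm_pow]
    rw [this, Complex.sq_norm, Complex.normSq_apply]; ring
  have hreal : z.re^2 - z.im^2 = w.re := by
    have := congrArg Complex.re hsq
    simpa [pow_two, Complex.mul_re] using this
  have himag : 2 * z.re * z.im = w.im := by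
    have := congrArg Complex.im hsq
    simp [pow_two, Complex.mul_im] at this
    linarith
  refine ⟨hre, ?_⟩
  have hd : ‖w‖ + w.re > 0 := by
    have := norm_nonneg w; linarith
  rw [div_eq_div_iff (ne_of_gt hre) (ne_of_gt hd)]
  linear_combination (-z.im) * habs + (-z.im) * hreal + z.re * himag

lemma w_explicit_aux (Uhat UEuler : ℝ) (hU : 1 < Uhat) (hUE : 0 < UEuler) (Ω : ℝ) :
    (1 / ((UEuler:ℂ)^2 * (1 + ((Uhat:ℂ) ^ 2 - 1) * (Complex.I * Ω) / (1 + Complex.I * Ω))))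
      = Complex.ofReal ((1+Ω^2*Uhat^2)/(UEuler^2*(1+Ω^2*Uhat^4)))
        + Complex.ofReal ((Ω*(1-Uhat^2))/(UEuler^2*(1+Ω^2*Uhat^4))) * Complex.I := by
  have h1 : (1 + Complex.I * (Ω:ℂ)) ≠ 0 := by
    intro h; have := congrArg Complex.re h; simp at this
  have hUE' : ((UEuler:ℂ)) ≠ 0 := Complex.ofReal_ne_zero.2 (ne_of_gt hUE)
  have h3 : ((1:ℂ) + (Ω:ℂ)^2 * (Uhat:ℂ)^4) ≠ 0 := by
    have : ((1:ℝ) + Ω^2 * Uhat^4) ≠ 0 := by positivity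
    intro h
    apply this
    have := congrArg Complex.re h
    simpa [← Complex.ofReal_pow] using this
  have hWq : (1:ℂ) + ((Uhat:ℂ) ^ 2 - 1) * (Complex.I * Ω) / (1 + Complex.I * Ω)
      = (1 + Complex.I * Ω * (Uhat:ℂ)^2) / (1 + Complex.I * Ω) := by
    field_simp
    ring
  rw [hWq, eq_comm]
  apply eq_one_div_of_mul_eq_one_left
  push_cast
  field_simp [h1, hUE', h3]
  rw [div_eq_iff (by rw [mul_comm]; exact h1)]
  apply Complex.ext <;>
    simp [← Complex.ofReal_pow, Complex.mul_re, Complex.mul_im, Complex.add_re,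
      Complex.add_im] <;> ring

lemma alpha_formula_aux (Uhat UEuler : ℝ) (hU : 1 < Uhat) (hUE : 0 < UEuler) (Ω : ℝ) :
    -(2 * Real.pi) * ((1 / ((UEuler:ℂ) ^ 2 *
        (1 + ((Uhat:ℂ) ^ 2 - 1) * (Complex.I * Ω) / (1 + Complex.I * Ω)))) ^ ((1:ℂ)/2)).im /
      ((1 / ((UEuler:ℂ) ^ 2 *
        (1 + ((Uhat:ℂ) ^ 2 - 1) * (Complex.I * Ω) / (1 + Complex.I * Ω)))) ^ ((1:ℂ)/2)).re
    = 2 * Real.pi * (Ω * (Uhat^2 - 1)) /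
        (Real.sqrt ((1+Ω^2)*(1+Ω^2*Uhat^4)) + (1+Ω^2*Uhat^2)) := by
  set D : ℝ := UEuler^2*(1+Ω^2*Uhat^4) with hDdef
  have hDpos : 0 < D := by positivity
  set u : ℝ := (1+Ω^2*Uhat^2)/D with hudef
  set v : ℝ := (Ω*(1-Uhat^2))/D with hvdef
  set w : ℂ := 1 / ((UEuler:ℂ) ^ 2 *
      (1 + ((Uhat:ℂ) ^ 2 - 1) * (Complex.I * Ω) / (1 + Complex.I * Ω))) with hwdef
  have hwc : w = Complex.ofReal u + Complex.ofReal v * Complex.I :=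
    w_explicit_aux Uhat UEuler hU hUE Ω
  have hwre : w.re = u := by rw [hwc]; simp
  have hwim : w.im = v := by rw [hwc]; simp
  have hupos : 0 < u := by
    rw [hudef]; positivity
  have hwrepos : 0 < w.re := by rw [hwre]; exact hupos
  obtain ⟨hzre, hratio⟩ := sqrt_ratio_aux w hwrepos
  set N : ℝ := (1+Ω^2)*(1+Ω^2*Uhat^4) with hNdef
  have hNnonneg : 0 ≤ N := by rw [hNdef]; positivity
  have habsw : ‖w‖ = Real.sqrt N / D := by
    rw [hwc, Complex.norm_def, Complex.normSq_add_mul_I]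
    have hsum : u^2 + v^2 = N / D^2 := by
      rw [hudef, hvdef, hNdef, hDdef]
      field_simp
      ring
    rw [hsum, Real.sqrt_div hNnonneg, Real.sqrt_sq hDpos.le]
  set S : ℝ := Real.sqrt N with hSdef
  have hSnonneg : 0 ≤ S := Real.sqrt_nonneg _
  have hden : 0 < S + (1+Ω^2*Uhat^2) := by positivity
  rw [mul_div_assoc, hratio, hwre, hwim, habsw]
  rw [hudef, hvdef]
  field_simp
  ring

/-- the low-frequency attenuation per wavelength attains its
maximum at Ω_peak = 1/Û with peak value 2π(Û−1)/(Û+1). -/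
theorem attenuation_peak
    (Uhat UEuler : ℝ) (hU : 1 < Uhat) (hUE : 0 < UEuler)
    (W : ℝ → ℂ)
    (hW : ∀ Ω : ℝ, W Ω = 1 + ((Uhat:ℂ) ^ 2 - 1) * (Complex.I * Ω) / (1 + Complex.I * Ω))
    -- z = k/ω is the branch of the dispersion relation 1/(z U_Euler)² = W(Ω)
    -- with Re k > 0, Im k < 0 (principal square root of 1/(U_Euler² W)):
    (z : ℝ → ℂ)
    (hz : ∀ Ω : ℝ, z Ω = (1 / ((UEuler:ℂ) ^ 2 * W Ω)) ^ ((1:ℂ)/2))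
    (alphaLambda : ℝ → ℝ)
    (halphaLambda : ∀ Ω : ℝ, alphaLambda Ω = -(2 * Real.pi) * (z Ω).im / (z Ω).re) :
    (∀ Ω ∈ Set.Ioi (0:ℝ), alphaLambda Ω ≤ alphaLambda (1 / Uhat)) ∧
    alphaLambda (1 / Uhat) = 2 * Real.pi * (Uhat - 1) / (Uhat + 1) := by
  have hUpos : 0 < Uhat := by linarith
  have hα : ∀ Ω : ℝ, alphaLambda Ω = 2 * Real.pi * (Ω * (Uhat^2 - 1)) /
      (Real.sqrt ((1+Ω^2)*(1+Ω^2*Uhat^4)) + (1+Ω^2*Uhat^2)) := by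
    intro Ω
    rw [halphaLambda, hz, hW]
    exact alpha_formula_aux Uhat UEuler hU hUE Ω
  -- value at the peak
  have hsqrt0 : Real.sqrt ((1+(1/Uhat)^2)*(1+(1/Uhat)^2*Uhat^4)) = (Uhat^2+1)/Uhat := by
    have h : (1+(1/Uhat)^2)*(1+(1/Uhat)^2*Uhat^4) = ((Uhat^2+1)/Uhat)^2 := by
      field_simp
      ring
    rw [h, Real.sqrt_sq (by positivity)]
  have hpeak : alphaLambda (1 / Uhat) = 2 * Real.pi * (Uhat - 1) / (Uhat + 1) := by
    rw [hα, hsqrt0]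
    have h1 : (1/Uhat)^2*Uhat^2 = 1 := by field_simp
    have hden : (Uhat^2+1)/Uhat + (1+(1/Uhat)^2*Uhat^2) = (Uhat+1)^2/Uhat := by
      rw [h1]; field_simp; ring
    rw [hden]
    rw [div_eq_div_iff (by positivity) (by positivity)]
    field_simp
    ring
  refine ⟨?_, hpeak⟩
  intro Ω hΩ
  have hΩpos : 0 < Ω := hΩ
  rw [hα, hpeak]
  set S : ℝ := Real.sqrt ((1+Ω^2)*(1+Ω^2*Uhat^4)) with hSdef
  have hSnonneg : 0 ≤ S := Real.sqrt_nonneg _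
  have hS2 : S^2 = (1+Ω^2)*(1+Ω^2*Uhat^4) := Real.sq_sqrt (by positivity)
  have hkey : Ω * (Uhat+1)^2 ≤ S + (1 + Ω^2*Uhat^2) := by
    nlinarith [hS2, hSnonneg, sq_nonneg (1 - Uhat*Ω), hΩpos.le,
      mul_nonneg (mul_nonneg hΩpos.le (sq_nonneg (1 - Uhat*Ω))) (sq_nonneg (Uhat+1))]
  have hdenpos : 0 < S + (1 + Ω^2*Uhat^2) := by positivity
  rw [div_le_div_iff₀ hdenpos (by positivity)]
  have h5 : Ω * (Uhat^2-1) * (Uhat+1) ≤ (Uhat-1) * (S + (1 + Ω^2*Uhat^2)) := by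
    have hfac : (0:ℝ) ≤ Uhat - 1 := by linarith
    nlinarith [mul_le_mul_of_nonneg_left hkey hfac]
  have h2pi : (0:ℝ) ≤ 2 * Real.pi := by positivity
  nlinarith [mul_le_mul_of_nonneg_left h5 h2pi]
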